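/- The family wIFS¹ of attractors of weak iterated function systems on [0,1] is an analytic subset of the hyperspace K([0,1]). -/

import Mathlib

/-- A weak contraction: `d(f(x),f(y)) < d(x,y)` for all distinct `x, y`. -/
def IsWeakContraction {X : Type*} [MetricSpace X] (f : X → X) : Prop :=
  ∀ x y, x ≠ y → dist (f x) (f y) < dist x y

/-- The family of attractors of weak iterated function systems on `[0,1]`, as a
subset of the hyperspace `K([0,1])` of nonempty compact subsets of `[0,1]`. -/
def wIFS1 : Set (TopologicalSpace.NonemptyCompacts (Set.Icc (0 : ℝ) 1)) :=
  {A | ∃ (k : ℕ) (s : Fin (k + 1) → Set.Icc (0 : ℝ) 1 → Set.Icc (0 : ℝ) 1),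
      (∀ i, IsWeakContraction (s i)) ∧
      (A : Set (Set.Icc (0 : ℝ) 1)) = ⋃ i, s i '' (A : Set (Set.Icc (0 : ℝ) 1))}

open TopologicalSpace Metric Set

namespace WIFSAux

/-- The unit interval. -/
abbrev I01 : Type := Set.Icc (0 : ℝ) 1

/-- The space of 1-Lipschitz continuous self-maps of `[0,1]`. -/
abbrev L : Type := {f : C(I01, I01) // LipschitzWith 1 ⇑f}

lemma isClosed_setL : IsClosed {f : C(I01, I01) | LipschitzWith 1 ⇑f} := by
  have h : {f : C(I01, I01) | LipschitzWith 1 ⇑f} =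
      ⋂ (x : I01) (y : I01), {f : C(I01, I01) | dist (f x) (f y) ≤ dist x y} := by
    ext f
    simp only [mem_setOf_eq, mem_iInter]
    constructor
    · intro hf x y; simpa using hf.dist_le_mul x y
    · intro hf
      exact LipschitzWith.of_dist_le_mul fun x y => by simpa using hf x y
  rw [h]
  refine isClosed_iInter fun x => isClosed_iInter fun y => ?_
  exact isClosed_le
    (Continuous.dist (continuous_eval_const x)
      (continuous_eval_const y)) continuous_const

instance : PolishSpace L := isClosed_setL.polishSpace

/-- Ambient Polish space: `(k+1)`-tuples of 1-Lipschitz maps together with a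
nonempty compact set. -/
abbrev Amb (k : ℕ) : Type := (Fin (k + 1) → L) × NonemptyCompacts I01

/-- The Hutchinson operator. -/
def hutch (k : ℕ) (p : Amb k) : NonemptyCompacts I01 :=
  ⟨⟨⋃ i, ((p.1 i : C(I01, I01)) : I01 → I01) '' (p.2 : Set I01),
      isCompact_iUnion fun i => p.2.isCompact.image (p.1 i).1.continuous⟩,
    Set.nonempty_iUnion.2 ⟨0, p.2.nonempty.image _⟩⟩

lemma coe_hutch (k : ℕ) (p : Amb k) :
    (hutch k p : Set I01) = ⋃ i, ((p.1 i : C(I01, I01)) : I01 → I01) '' (p.2 : Set I01) := rfl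

lemma dist_fst_le' {k : ℕ} (p q : Amb k) (i : Fin (k + 1)) :
    dist (p.1 i) (q.1 i) ≤ dist p q := by
  refine le_trans (dist_le_pi_dist p.1 q.1 i) ?_
  rw [Prod.dist_eq]; exact le_max_left _ _

lemma dist_snd_le' {k : ℕ} (p q : Amb k) : dist p.2 q.2 ≤ dist p q := by
  rw [Prod.dist_eq]; exact le_max_right _ _

lemma key {k : ℕ} (p q : Amb k) :
    ∀ x ∈ (hutch k p : Set I01), ∃ y ∈ (hutch k q : Set I01), dist x y ≤ 2 * dist p q := by
  rintro x hx
  rw [coe_hutch] at hx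
  obtain ⟨i, a, ha, rfl⟩ := by simpa only [mem_iUnion, mem_image] using hx
  -- find a nearby point in q.2
  have hfin : EMetric.hausdorffEdist (p.2 : Set I01) (q.2 : Set I01) ≠ ⊤ :=
    Metric.hausdorffEdist_ne_top_of_nonempty_of_bounded p.2.nonempty q.2.nonempty
      p.2.isCompact.isBounded q.2.isCompact.isBounded
  obtain ⟨b, hb, hab⟩ := q.2.isCompact.exists_infDist_eq_dist q.2.nonempty a
  have hdab : dist a b ≤ dist p q := by
    rw [← hab]
    refine le_trans (Metric.infDist_le_hausdorffDist_of_mem ha hfin) ?_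
    exact dist_snd_le' p q
  refine ⟨(q.1 i : C(I01, I01)) b, ?_, ?_⟩
  · rw [coe_hutch]
    exact mem_iUnion.2 ⟨i, Set.mem_image_of_mem _ hb⟩
  · have h1 : dist ((p.1 i : C(I01, I01)) a) ((q.1 i : C(I01, I01)) a) ≤ dist p q := by
      refine le_trans (ContinuousMap.dist_apply_le_dist a) ?_
      refine le_trans (le_of_eq (Subtype.dist_eq (p.1 i) (q.1 i)).symm) (dist_fst_le' p q i)
    have h2 : dist ((q.1 i : C(I01, I01)) a) ((q.1 i : C(I01, I01)) b) ≤ dist a b := by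
      simpa using (q.1 i).2.dist_le_mul a b
    calc dist ((p.1 i : C(I01, I01)) a) ((q.1 i : C(I01, I01)) b)
        ≤ dist ((p.1 i : C(I01, I01)) a) ((q.1 i : C(I01, I01)) a) +
          dist ((q.1 i : C(I01, I01)) a) ((q.1 i : C(I01, I01)) b) := dist_triangle _ _ _
      _ ≤ dist p q + dist a b := add_le_add h1 h2
      _ ≤ dist p q + dist p q := add_le_add_right hdab _
      _ = 2 * dist p q := by ring

lemma lipschitz_hutch (k : ℕ) : LipschitzWith 2 (hutch k) := by
  refine LipschitzWith.of_dist_le_mul fun p q => ?_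
  have hr : (0 : ℝ) ≤ 2 * dist p q := by positivity
  have hd : dist (hutch k p) (hutch k q) =
      hausdorffDist (hutch k p : Set I01) (hutch k q : Set I01) := rfl
  rw [hd]
  have h := Metric.hausdorffDist_le_of_mem_dist hr (key p q)
    (fun y hy => by
      obtain ⟨x, hx, hxy⟩ := key q p y hy
      exact ⟨x, hx, by rw [dist_comm y x]; rwa [dist_comm, dist_comm q p] at hxy⟩)
  simpa using h

/-- The set of (1-Lipschitz) weak contractions. -/
def Wset : Set L := {f | IsWeakContraction ⇑(f : C(I01, I01))}

/-- Approximating open sets. -/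
def Un (n : ℕ) : Set L :=
  {f | ∀ x y : I01, 1 / (n + 1 : ℝ) ≤ dist x y →
    dist ((f : C(I01, I01)) x) ((f : C(I01, I01)) y) < dist x y}

lemma Wset_eq : Wset = ⋂ n, Un n := by
  ext f
  simp only [Wset, Un, mem_setOf_eq, mem_iInter]
  constructor
  · intro hf n x y hxy
    have hne : x ≠ y := by
      rintro rfl
      simp only [dist_self] at hxy
      have : (0 : ℝ) < 1 / (n + 1 : ℝ) := by positivity
      linarith
    exact hf x y hne
  · intro hf x y hne
    have hpos : 0 < dist x y := dist_pos.2 hne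
    obtain ⟨n, hn⟩ := exists_nat_one_div_lt hpos
    exact hf n x y hn.le

lemma isOpen_Un (n : ℕ) : IsOpen (Un n) := by
  rw [Metric.isOpen_iff]
  intro f hf
  set Kn : Set (I01 × I01) := {q | 1 / (n + 1 : ℝ) ≤ dist q.1 q.2} with hKn
  have hKc : IsCompact Kn := by
    have : IsClosed Kn := isClosed_le continuous_const (continuous_fst.dist continuous_snd)
    exact this.isCompact
  rcases Kn.eq_empty_or_nonempty with hemp | hne
  · refine ⟨1, one_pos, fun g _ => ?_⟩
    intro x y hxy
    exfalso
    have : (x, y) ∈ Kn := hxy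
    rw [hemp] at this
    exact this
  · have hcont : Continuous fun q : I01 × I01 =>
        dist q.1 q.2 - dist ((f : C(I01, I01)) q.1) ((f : C(I01, I01)) q.2) := by
      refine Continuous.sub (continuous_fst.dist continuous_snd) ?_
      exact ((f : C(I01, I01)).continuous.comp continuous_fst).dist
        ((f : C(I01, I01)).continuous.comp continuous_snd)
    obtain ⟨q0, hq0, hmin⟩ := hKc.exists_isMinOn hne hcont.continuousOn
    set ε : ℝ := dist q0.1 q0.2 - dist ((f : C(I01, I01)) q0.1) ((f : C(I01, I01)) q0.2) with hε
    have hεpos : 0 < ε := sub_pos.2 (hf q0.1 q0.2 hq0)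
    refine ⟨ε / 2, by positivity, fun g hg => ?_⟩
    rw [mem_ball] at hg
    intro x y hxy
    have hxyK : (x, y) ∈ Kn := hxy
    have hfxy : dist ((f : C(I01, I01)) x) ((f : C(I01, I01)) y) ≤ dist x y - ε := by
      have := hmin hxyK
      simp only [ε] at this ⊢
      dsimp at this
      linarith
    have hgf : dist (g : C(I01, I01)) (f : C(I01, I01)) < ε / 2 := by
      rw [← Subtype.dist_eq]; exact hg
    have hgx : dist ((g : C(I01, I01)) x) ((f : C(I01, I01)) x) < ε / 2 :=
      lt_of_le_of_lt (ContinuousMap.dist_apply_le_dist x) hgf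
    have hgy : dist ((f : C(I01, I01)) y) ((g : C(I01, I01)) y) < ε / 2 := by
      rw [dist_comm]
      exact lt_of_le_of_lt (ContinuousMap.dist_apply_le_dist y) hgf
    calc dist ((g : C(I01, I01)) x) ((g : C(I01, I01)) y)
        ≤ dist ((g : C(I01, I01)) x) ((f : C(I01, I01)) x) +
          dist ((f : C(I01, I01)) x) ((f : C(I01, I01)) y) +
          dist ((f : C(I01, I01)) y) ((g : C(I01, I01)) y) := dist_triangle4 _ _ _ _
      _ < ε / 2 + (dist x y - ε) + ε / 2 := by
          have := add_lt_add_of_lt_of_le hgx hfxy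
          linarith
      _ = dist x y := by ring

/-- The set of pairs (system, attractor). -/
def Dset (k : ℕ) : Set (Amb k) :=
  {p | (∀ i, IsWeakContraction ⇑((p.1 i : C(I01, I01)))) ∧ hutch k p = p.2}

lemma analytic_sndD (k : ℕ) : MeasureTheory.AnalyticSet (Prod.snd '' Dset k) := by
  borelize L (Amb k)
  have hW : MeasurableSet Wset := by
    rw [Wset_eq]
    exact MeasurableSet.iInter fun n => (isOpen_Un n).measurableSet
  have h1 : MeasurableSet {p : Amb k | ∀ i, IsWeakContraction ⇑((p.1 i : C(I01, I01)))} := by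
    have : {p : Amb k | ∀ i, IsWeakContraction ⇑((p.1 i : C(I01, I01)))} =
        ⋂ i, (fun p : Amb k => p.1 i) ⁻¹' Wset := by
      ext p; simp only [mem_setOf_eq, mem_iInter, mem_preimage, Wset]
    rw [this]
    refine MeasurableSet.iInter fun i => ?_
    have hc : Continuous fun p : Amb k => p.1 i := (continuous_apply i).comp continuous_fst
    exact hc.measurable hW
  have h2 : MeasurableSet {p : Amb k | hutch k p = p.2} :=
    (isClosed_eq (lipschitz_hutch k).continuous continuous_snd).measurableSet
  have hD : MeasurableSet (Dset k) := h1.inter h2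
  exact hD.analyticSet.image_of_continuous continuous_snd

end WIFSAux

/-- `wIFS¹` is an analytic subset of `K([0,1])`. -/
theorem stmt11 : MeasureTheory.AnalyticSet wIFS1 := by
  open WIFSAux in
  have hEq : wIFS1 = ⋃ k, Prod.snd '' WIFSAux.Dset k := by
    ext A
    simp only [wIFS1, mem_setOf_eq, mem_iUnion, mem_image]
    constructor
    · rintro ⟨k, s, hw, hA⟩
      have hlip : ∀ i, LipschitzWith 1 (s i) := fun i =>
        LipschitzWith.of_dist_le_mul fun x y => by
          rcases eq_or_ne x y with rfl | hne
          · simp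
          · simpa using (hw i x y hne).le
      refine ⟨k, (fun i => ⟨⟨s i, (hlip i).continuous⟩, hlip i⟩, A), ⟨fun i => hw i, ?_⟩, rfl⟩
      exact TopologicalSpace.NonemptyCompacts.ext hA.symm
    · rintro ⟨k, p, ⟨hw, heq⟩, rfl⟩
      refine ⟨k, fun i => ⇑((p.1 i : C(WIFSAux.I01, WIFSAux.I01))), hw, ?_⟩
      have := congrArg (fun t : TopologicalSpace.NonemptyCompacts WIFSAux.I01 =>
        (t : Set WIFSAux.I01)) heq
      exact this.symm
  rw [hEq]
  exact MeasureTheory.AnalyticSet.iUnion fun k => WIFSAux.analytic_sndD k
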